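/- For 0 < ρ < 1/2 and p = 1 - ρ, the quantity q̃ = -1 + Σ_{i≥0} C_i p^{i+1} ρ^i/(i+1) - ln p equals 1 + ((1-ρ)/ρ) · ln(1-ρ), where C_i is the i-th Catalan number. -/

import Mathlib

open Finset Real

/-- The `i`-th Catalan number `binomial(2i,i)/(i+1)`, as a real number. -/
noncomputable def catalanR (i : ℕ) : ℝ := (Nat.choose (2 * i) i : ℝ) / ((i : ℝ) + 1)

noncomputable def catF (x : ℝ) : ℝ := ∑' i : ℕ, (catalan i : ℝ) * x ^ i

lemma catalan_le_four_pow (n : ℕ) : (catalan n : ℝ) ≤ 4 ^ n := by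
  have h1 : catalan n ≤ n.centralBinom := by
    have := succ_mul_catalan_eq_centralBinom n
    calc catalan n ≤ (n + 1) * catalan n := Nat.le_mul_of_pos_left _ (Nat.succ_pos n)
    _ = n.centralBinom := this
  have h2 : n.centralBinom ≤ 4 ^ n := by
    have : n.centralBinom ≤ (2 * n + 1).choose n := by
      unfold Nat.centralBinom
      exact Nat.choose_le_choose n (Nat.le_succ _)
    exact this.trans (Nat.choose_middle_le_pow n)
  exact_mod_cast h1.trans h2

lemma summable_cat {x : ℝ} (h0 : 0 ≤ x) (h4 : x < 1 / 4) :
    Summable (fun i : ℕ => (catalan i : ℝ) * x ^ i) := by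
  refine Summable.of_nonneg_of_le (fun i => by positivity)
    (fun i => ?_) (summable_geometric_of_lt_one (by positivity) (by linarith) :
      Summable fun i : ℕ => (4 * x) ^ i)
  calc (catalan i : ℝ) * x ^ i ≤ 4 ^ i * x ^ i := by
        exact mul_le_mul_of_nonneg_right (catalan_le_four_pow i) (by positivity)
  _ = (4 * x) ^ i := (mul_pow _ _ _).symm

lemma catF_funEq {x : ℝ} (h0 : 0 ≤ x) (h4 : x < 1 / 4) :
    catF x = 1 + x * catF x ^ 2 := by
  have hs := summable_cat h0 h4
  have hnorm : Summable fun i : ℕ => ‖(catalan i : ℝ) * x ^ i‖ := by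
    simpa only [Real.norm_eq_abs, abs_of_nonneg (by positivity :
      (0:ℝ) ≤ (catalan _ : ℝ) * x ^ _)] using hs
  have hmul : catF x * catF x
      = ∑' n : ℕ, ∑ kl ∈ antidiagonal n,
          ((catalan kl.1 : ℝ) * x ^ kl.1) * ((catalan kl.2 : ℝ) * x ^ kl.2) :=
    tsum_mul_tsum_eq_tsum_sum_antidiagonal_of_summable_norm hnorm hnorm
  have hinner : ∀ n : ℕ, ∑ kl ∈ antidiagonal n,
      ((catalan kl.1 : ℝ) * x ^ kl.1) * ((catalan kl.2 : ℝ) * x ^ kl.2)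
      = (catalan (n + 1) : ℝ) * x ^ n := by
    intro n
    rw [catalan_succ' n]
    push_cast
    rw [Finset.sum_mul]
    refine Finset.sum_congr rfl fun kl hkl => ?_
    have : kl.1 + kl.2 = n := Finset.HasAntidiagonal.mem_antidiagonal.mp hkl
    rw [← this, pow_add]; ring
  have h2 : x * (catF x * catF x) = ∑' n : ℕ, (catalan (n + 1) : ℝ) * x ^ (n + 1) := by
    rw [hmul, tsum_congr hinner, ← tsum_mul_left]
    refine tsum_congr fun n => ?_
    rw [pow_succ]; ring
  have h3 : catF x = (catalan 0 : ℝ) * x ^ 0 + ∑' n : ℕ, (catalan (n+1) : ℝ) * x ^ (n+1) :=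
    Summable.tsum_eq_zero_add hs
  rw [sq]
  conv_lhs => rw [h3]
  rw [h2]
  simp

lemma catF_val {ρ : ℝ} (h0 : 0 < ρ) (h2 : ρ < 1 / 2) :
    (1 - ρ) * catF (ρ * (1 - ρ)) = 1 := by
  -- the key quadratic relation
  have key : ∀ σ : ℝ, 0 < σ → σ < 1 / 2 →
      ((1 - σ) * catF (σ * (1 - σ)) - 1) *
        (σ * ((1 - σ) * catF (σ * (1 - σ))) - (1 - σ)) = 0 := by
    intro σ hσ0 hσ2
    have hx0 : (0:ℝ) ≤ σ * (1 - σ) := by nlinarith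
    have hx4 : σ * (1 - σ) < 1 / 4 := by nlinarith
    have hf := catF_funEq hx0 hx4
    have : ((1 - σ) * catF (σ * (1 - σ)) - 1) *
        (σ * ((1 - σ) * catF (σ * (1 - σ))) - (1 - σ))
        = (1 - σ) * ((1 + (σ * (1 - σ)) * catF (σ * (1 - σ)) ^ 2) - catF (σ * (1 - σ))) := by
      ring
    rw [this, ← hf]; ring
  -- continuity on [0, ρ]
  have hcont : ContinuousOn (fun σ : ℝ => catF (σ * (1 - σ))) (Set.Icc 0 ρ) := by
    have hb : (0:ℝ) ≤ ρ * (1 - ρ) := by nlinarith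
    have hb4 : ρ * (1 - ρ) < 1 / 4 := by nlinarith
    refine continuousOn_tsum (u := fun i => (catalan i : ℝ) * (ρ * (1 - ρ)) ^ i)
      (fun i => (Continuous.continuousOn (by fun_prop))) (summable_cat hb hb4) ?_
    intro n σ hσ
    obtain ⟨hσ0, hσρ⟩ := hσ
    have h1 : 0 ≤ σ * (1 - σ) := by nlinarith
    have h2' : σ * (1 - σ) ≤ ρ * (1 - ρ) := by nlinarith
    rw [Real.norm_eq_abs, abs_of_nonneg (by positivity)]
    exact mul_le_mul_of_nonneg_left (pow_le_pow_left₀ h1 h2' n) (by positivity)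
  -- base point
  set ρ₀ : ℝ := min ρ (1/8) with hρ₀def
  have hρ₀pos : 0 < ρ₀ := lt_min h0 (by norm_num)
  have hρ₀le : ρ₀ ≤ 1/8 := min_le_right _ _
  have hρ₀ρ : ρ₀ ≤ ρ := min_le_left _ _
  have hρ₀2 : ρ₀ < 1/2 := lt_of_le_of_lt hρ₀le (by norm_num)
  have hbase : (1 - ρ₀) * catF (ρ₀ * (1 - ρ₀)) = 1 := by
    have hx0 : (0:ℝ) ≤ ρ₀ * (1 - ρ₀) := by nlinarith
    have hx4 : ρ₀ * (1 - ρ₀) < 1 / 4 := by nlinarith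
    -- bound : catF ≤ 2
    have hFle : catF (ρ₀ * (1 - ρ₀)) ≤ 2 := by
      have hgs : Summable fun i : ℕ => (4 * (ρ₀ * (1 - ρ₀))) ^ i :=
        summable_geometric_of_lt_one (by positivity) (by linarith)
      have hle : catF (ρ₀ * (1 - ρ₀)) ≤ ∑' i : ℕ, (4 * (ρ₀ * (1 - ρ₀))) ^ i := by
        refine Summable.tsum_le_tsum (fun i => ?_) (summable_cat hx0 hx4) hgs
        calc (catalan i : ℝ) * (ρ₀ * (1 - ρ₀)) ^ i
            ≤ 4 ^ i * (ρ₀ * (1 - ρ₀)) ^ i :=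
              mul_le_mul_of_nonneg_right (catalan_le_four_pow i) (by positivity)
          _ = (4 * (ρ₀ * (1 - ρ₀))) ^ i := (mul_pow _ _ _).symm
      have hval : ∑' i : ℕ, (4 * (ρ₀ * (1 - ρ₀))) ^ i = (1 - 4 * (ρ₀ * (1 - ρ₀)))⁻¹ :=
        tsum_geometric_of_lt_one (by positivity) (by linarith)
      have h4x : 4 * (ρ₀ * (1 - ρ₀)) ≤ 1/2 := by nlinarith
      have : (1 - 4 * (ρ₀ * (1 - ρ₀)))⁻¹ ≤ 2 := by
        rw [inv_le_comm₀ (by linarith) (by norm_num)]; linarith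
      linarith [hle, hval ▸ hle]
    have hF0 : 0 ≤ catF (ρ₀ * (1 - ρ₀)) :=
      tsum_nonneg (fun i => by positivity)
    rcases mul_eq_zero.mp (key ρ₀ hρ₀pos hρ₀2) with h | h
    · linarith [h]
    · exfalso
      have : ρ₀ * ((1 - ρ₀) * catF (ρ₀ * (1 - ρ₀))) ≤ ρ₀ * ((1 - ρ₀) * 2) := by
        nlinarith
      nlinarith
  -- IVT
  by_contra hne
  rcases mul_eq_zero.mp (key ρ h0 h2) with h | h
  · exact hne (by linarith)
  have hval : ρ * ((1 - ρ) * catF (ρ * (1 - ρ))) = 1 - ρ := by linarith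
  -- ψ σ = 2 σ u σ - 1
  set ψ : ℝ → ℝ := fun σ => 2 * σ * ((1 - σ) * catF (σ * (1 - σ))) - 1 with hψdef
  have hψcont : ContinuousOn ψ (Set.Icc ρ₀ ρ) := by
    apply ContinuousOn.mono _ (Set.Icc_subset_Icc_left hρ₀pos.le)
    apply ContinuousOn.sub _ continuousOn_const
    exact ((continuous_const.mul continuous_id).continuousOn).mul
      ((continuous_const.sub continuous_id).continuousOn.mul hcont)
  have hψa : ψ ρ₀ ≤ 0 := by
    simp only [hψdef, hbase]; linarith
  have hψb : 0 ≤ ψ ρ := by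
    simp only [hψdef]
    nlinarith [hval]
  have := intermediate_value_Icc hρ₀ρ hψcont
  obtain ⟨c, hc, hψc⟩ := this ⟨hψa, hψb⟩
  obtain ⟨hc1, hc2⟩ := hc
  have hc0 : 0 < c := lt_of_lt_of_le hρ₀pos hc1
  have hc2' : c < 1/2 := lt_of_le_of_lt hc2 h2
  have hcval : 2 * c * ((1 - c) * catF (c * (1 - c))) = 1 := by
    simp only [hψdef] at hψc; linarith
  rcases mul_eq_zero.mp (key c hc0 hc2') with h' | h'
  · have : (1 - c) * catF (c * (1 - c)) = 1 := by linarith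
    rw [this] at hcval; linarith
  · have : c * ((1 - c) * catF (c * (1 - c))) = 1 - c := by linarith
    nlinarith [hcval]


lemma catF_closed {t : ℝ} (h0 : 0 ≤ t) (h4 : t < 1 / 4) :
    catF t = 2 / (1 + Real.sqrt (1 - 4 * t)) := by
  rcases eq_or_lt_of_le h0 with h | h
  · subst h
    have : catF 0 = 1 := by
      unfold catF
      rw [tsum_eq_single 0 (fun i hi => by
        rw [zero_pow hi, mul_zero])]
      simp
    rw [this]; norm_num
  · set s : ℝ := Real.sqrt (1 - 4 * t) with hs
    have hs0 : 0 < s := Real.sqrt_pos.mpr (by linarith)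
    have hssq : s ^ 2 = 1 - 4 * t := Real.sq_sqrt (by linarith)
    have hs1 : s < 1 := by nlinarith [hssq, hs0]
    set ρ : ℝ := (1 - s) / 2 with hρ
    have hρ0 : 0 < ρ := by rw [hρ]; linarith
    have hρ2 : ρ < 1 / 2 := by rw [hρ]; linarith
    have hx : ρ * (1 - ρ) = t := by
      rw [hρ]; nlinarith [hssq]
    have := catF_val hρ0 hρ2
    rw [hx] at this
    have h1ρ : 1 - ρ = (1 + s) / 2 := by rw [hρ]; ring
    rw [h1ρ] at this
    field_simp at this ⊢
    linarith [this]

-- integral swap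
lemma tsum_integral {x₀ : ℝ} (h0 : 0 ≤ x₀) (h4 : x₀ < 1 / 4) :
    ∑' i : ℕ, (catalan i : ℝ) * x₀ ^ (i + 1) / ((i : ℝ) + 1)
      = ∫ t in (0:ℝ)..x₀, catF t := by
  set f : ℕ → C(ℝ, ℝ) := fun i => ⟨fun t => (catalan i : ℝ) * t ^ i, by fun_prop⟩ with hf
  have hnorm : ∀ i, ‖(f i).restrict (⟨Set.uIcc 0 x₀, isCompact_uIcc⟩ : TopologicalSpace.Compacts ℝ)‖
      ≤ (catalan i : ℝ) * x₀ ^ i := by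
    intro i
    refine ContinuousMap.norm_le _ (by positivity) |>.mpr ?_
    rintro ⟨y, hy⟩
    have hy' : y ∈ Set.Icc 0 x₀ := by
      simpa [Set.uIcc_of_le h0] using hy
    simp only [ContinuousMap.restrict_apply, hf, ContinuousMap.coe_mk]
    rw [Real.norm_eq_abs, abs_of_nonneg (mul_nonneg (Nat.cast_nonneg _) (pow_nonneg hy'.1 i))]
    exact mul_le_mul_of_nonneg_left (pow_le_pow_left₀ hy'.1 hy'.2 i) (Nat.cast_nonneg _)
  have hsum : Summable fun i : ℕ =>
      ‖(f i).restrict (⟨Set.uIcc 0 x₀, isCompact_uIcc⟩ : TopologicalSpace.Compacts ℝ)‖ :=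
    Summable.of_nonneg_of_le (fun i => norm_nonneg _) hnorm (summable_cat h0 h4)
  have hswap := intervalIntegral.tsum_intervalIntegral_eq_of_summable_norm
    (a := 0) (b := x₀) hsum
  have heval : ∀ i : ℕ, (∫ t in (0:ℝ)..x₀, f i t)
      = (catalan i : ℝ) * x₀ ^ (i + 1) / ((i : ℝ) + 1) := by
    intro i
    simp only [hf, ContinuousMap.coe_mk]
    rw [intervalIntegral.integral_const_mul, integral_pow]
    push_cast
    rw [zero_pow (by omega)]
    ring
  calc ∑' i : ℕ, (catalan i : ℝ) * x₀ ^ (i + 1) / ((i : ℝ) + 1)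
      = ∑' i : ℕ, ∫ t in (0:ℝ)..x₀, f i t := by
        exact (tsum_congr heval).symm
    _ = ∫ t in (0:ℝ)..x₀, ∑' i : ℕ, f i t := hswap
    _ = ∫ t in (0:ℝ)..x₀, catF t := by
        refine intervalIntegral.integral_congr fun t ht => ?_
        rfl

-- FTC computation
lemma integral_closed {x₀ : ℝ} (h0 : 0 ≤ x₀) (h4 : x₀ < 1 / 4) :
    ∫ t in (0:ℝ)..x₀, 2 / (1 + Real.sqrt (1 - 4 * t))
      = (1 - Real.sqrt (1 - 4 * x₀)) + Real.log ((1 + Real.sqrt (1 - 4 * x₀)) / 2) := by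
  set A : ℝ → ℝ := fun t => 1 - Real.sqrt (1 - 4 * t) + Real.log ((1 + Real.sqrt (1 - 4 * t)) / 2)
    with hA
  have hderiv : ∀ t ∈ Set.uIcc (0:ℝ) x₀,
      HasDerivAt A (2 / (1 + Real.sqrt (1 - 4 * t))) t := by
    intro t ht
    rw [Set.uIcc_of_le h0] at ht
    have hpos : 0 < 1 - 4 * t := by
      have := ht.2; linarith
    set s : ℝ := Real.sqrt (1 - 4 * t) with hs
    have hs0 : 0 < s := Real.sqrt_pos.mpr hpos
    have h1 : HasDerivAt (fun u : ℝ => 1 - 4 * u) (-4) t := by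
      simpa using ((hasDerivAt_id t).const_mul (4:ℝ)).const_sub 1
    have h2 : HasDerivAt (fun u : ℝ => Real.sqrt (1 - 4 * u))
        (1 / (2 * s) * (-4)) t :=
      (Real.hasDerivAt_sqrt (ne_of_gt hpos)).comp t h1
    have h3 : HasDerivAt (fun u : ℝ => (1 + Real.sqrt (1 - 4 * u)) / 2)
        ((1 / (2 * s) * (-4)) / 2) t := (h2.const_add 1).div_const 2
    have hne : (1 + s) / 2 ≠ 0 := by positivity
    have h4' : HasDerivAt (fun u : ℝ => Real.log ((1 + Real.sqrt (1 - 4 * u)) / 2))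
        (((1 / (2 * s) * (-4)) / 2) / ((1 + s) / 2)) t := h3.log hne
    have h5 := ((h2.const_sub 1).add h4')
    refine HasDerivAt.congr_deriv h5 ?_
    field_simp
    ring
  have hint : IntervalIntegrable (fun t => 2 / (1 + Real.sqrt (1 - 4 * t)))
      MeasureTheory.volume 0 x₀ := by
    apply Continuous.intervalIntegrable
    have : ∀ t : ℝ, 1 + Real.sqrt (1 - 4 * t) ≠ 0 := by
      intro t
      have := Real.sqrt_nonneg (1 - 4 * t)
      positivity
    exact continuous_const.div (by fun_prop) this
  rw [intervalIntegral.integral_eq_sub_of_hasDerivAt hderiv hint]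
  simp [hA]

lemma catalanR_eq_catalan (i : ℕ) : catalanR i = (catalan i : ℝ) := by
  have h := succ_mul_catalan_eq_centralBinom i
  have hcb : i.centralBinom = (2 * i).choose i := rfl
  have h' : ((i : ℝ) + 1) * (catalan i : ℝ) = (Nat.choose (2 * i) i : ℝ) := by
    rw [← hcb]
    exact_mod_cast congrArg (Nat.cast : ℕ → ℝ) h
  have hi : ((i : ℝ) + 1) ≠ 0 := by positivity
  rw [catalanR, ← h', mul_comm, mul_div_assoc, div_self hi, mul_one]

/-- For `0 < ρ < 1/2` and `p = 1 - ρ`: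
`q̃ = -1 + Σ_{i≥0} C_i p^{i+1} ρ^i/(i+1) - ln p = 1 + ((1-ρ)/ρ)·ln(1-ρ)`. -/
theorem qtilde_value (ρ : ℝ) (hρ0 : 0 < ρ) (hρ : ρ < 1 / 2) :
    -1 + (∑' i : ℕ, catalanR i * (1 - ρ) ^ (i + 1) * ρ ^ i / ((i : ℝ) + 1))
        - Real.log (1 - ρ)
      = 1 + ((1 - ρ) / ρ) * Real.log (1 - ρ) := by
  set x₀ : ℝ := ρ * (1 - ρ) with hx₀
  have h0x : 0 ≤ x₀ := by rw [hx₀]; nlinarith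
  have h4x : x₀ < 1 / 4 := by rw [hx₀]; nlinarith
  have hsqrt : Real.sqrt (1 - 4 * x₀) = 1 - 2 * ρ := by
    rw [hx₀, show 1 - 4 * (ρ * (1 - ρ)) = (1 - 2 * ρ) ^ 2 by ring]
    exact Real.sqrt_sq (by linarith)
  have hT : ∑' i : ℕ, (catalan i : ℝ) * x₀ ^ (i + 1) / ((i : ℝ) + 1)
      = 2 * ρ + Real.log (1 - ρ) := by
    rw [tsum_integral h0x h4x]
    have hcongr : ∫ t in (0:ℝ)..x₀, catF t
        = ∫ t in (0:ℝ)..x₀, 2 / (1 + Real.sqrt (1 - 4 * t)) := by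
      refine intervalIntegral.integral_congr fun t ht => ?_
      rw [Set.uIcc_of_le h0x] at ht
      exact catF_closed ht.1 (lt_of_le_of_lt ht.2 h4x)
    rw [hcongr, integral_closed h0x h4x, hsqrt,
      show (1 + (1 - 2 * ρ)) / 2 = 1 - ρ by ring]
    ring
  have hterm : ∀ i : ℕ, catalanR i * (1 - ρ) ^ (i + 1) * ρ ^ i / ((i : ℝ) + 1)
      = ((catalan i : ℝ) * x₀ ^ (i + 1) / ((i : ℝ) + 1)) * ρ⁻¹ := by
    intro i
    rw [catalanR_eq_catalan, hx₀, mul_pow, pow_succ]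
    have hρ' : ρ ≠ 0 := ne_of_gt hρ0
    field_simp
    ring
  rw [tsum_congr hterm, tsum_mul_right, hT]
  have hρ' : ρ ≠ 0 := ne_of_gt hρ0
  field_simp
  ring
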